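/- With η(h)(r) = (√(169r² − 4r + 4) − 13r + 2)/4 and payoffs u_x(he) = 42, u_x(de) = 36, mean payoff u_x = 40, the invading-trait payoff u_x(e) = 42η(h) + 36(1−η(h)) exceeds u_x = 40 if and only if r < 1/6 (equivalently η(h)(r) > 2/3 iff r < 1/6). -/
import Mathlib


/-- with `η(h)(r) = (√(169r² − 4r + 4) − 13r + 2)/4` and payoffs
`u_x(he) = 42`, `u_x(de) = 36`, mean payoff `u_x = 40`, the invading-trait
payoff `42η + 36(1−η)` exceeds 40 iff `r < 1/6` (equivalently `η > 2/3` iff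
`r < 1/6`). -/
theorem emotional_hd_invading_payoff_iff (r : ℝ) (hr0 : 0 < r) (hr1 : r < 1) :
    ∀ η : ℝ, η = (Real.sqrt (169 * r ^ 2 - 4 * r + 4) - 13 * r + 2) / 4 →
      (42 * η + 36 * (1 - η) > 40 ↔ r < 1 / 6) ∧ (η > 2 / 3 ↔ r < 1 / 6) := by
  intro η hη
  set s := Real.sqrt (169 * r ^ 2 - 4 * r + 4) with hs
  have hA : (0:ℝ) ≤ 169 * r ^ 2 - 4 * r + 4 := by nlinarith
  have hs0 : 0 ≤ s := Real.sqrt_nonneg _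
  have hsq : s ^ 2 = 169 * r ^ 2 - 4 * r + 4 := Real.sq_sqrt hA
  have key : η > 2 / 3 ↔ r < 1 / 6 := by
    constructor
    · intro h
      have h1 : s > 13 * r + 2 / 3 := by rw [hη] at h; linarith
      nlinarith [sq_nonneg s]
    · intro h
      have h1 : s > 13 * r + 2 / 3 := by nlinarith [sq_nonneg (s - (13 * r + 2 / 3))]
      rw [hη]; linarith
  refine ⟨?_, key⟩
  constructor
  · intro h; exact key.mp (by linarith)
  · intro h; have := key.mpr h; linarith
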